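/- Let f be the k-of-n threshold function with 1 ≤ k ≤ n. Then Γ(f) = k(n−k+1). -/

import Mathlib

attribute [local instance] Classical.propDecidable

/-- `b'` extends the partial assignment `b`: it agrees on all non-`*` coordinates of `b`. -/
def Extends {n : ℕ} (b' b : Fin n → Option Bool) : Prop :=
  ∀ i v, b i = some v → b' i = some v

/-- A total assignment `x` extends the partial assignment `b`. -/
def TExtends {n : ℕ} (x : Fin n → Bool) (b : Fin n → Option Bool) : Prop :=
  ∀ i v, b i = some v → x i = v

/-- `b` is a certificate of `f`: `f` is constant on all total extensions of `b`. -/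
def IsCert {n : ℕ} (f : (Fin n → Bool) → Bool) (b : Fin n → Option Bool) : Prop :=
  ∀ x y, TExtends x b → TExtends y b → f x = f y

/-- `b` is a `k`-certificate of `f`: it forces `f` to the value `k`. -/
def IsKCert {n : ℕ} (f : (Fin n → Bool) → Bool) (k : Bool) (b : Fin n → Option Bool) : Prop :=
  ∀ x, TExtends x b → f x = k

/-- A certificate is minimal if no proper restriction of it is a certificate. -/
def MinCert {n : ℕ} (f : (Fin n → Bool) → Bool) (c : Fin n → Option Bool) : Prop :=
  IsCert f c ∧ ∀ c', Extends c c' → c' ≠ c → ¬ IsCert f c'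

/-- A `k`-certificate is minimal if no proper restriction of it is a `k`-certificate. -/
def MinKCert {n : ℕ} (f : (Fin n → Bool) → Bool) (k : Bool) (c : Fin n → Option Bool) : Prop :=
  IsKCert f k c ∧ ∀ c', Extends c c' → c' ≠ c → ¬ IsKCert f k c'

/-- Monotone utility function: filling in `*`'s never decreases the value. -/
def Mono {n : ℕ} (g : (Fin n → Option Bool) → ℕ) : Prop :=
  ∀ b b', Extends b' b → g b ≤ g b'

/-- Submodular utility function: marginal gains shrink under extension. -/
def Submod {n : ℕ} (g : (Fin n → Option Bool) → ℕ) : Prop :=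
  ∀ b b' (i : Fin n) (ℓ : Bool), Extends b' b → b i = none → b' i = none →
    g (Function.update b' i (some ℓ)) + g b ≤ g (Function.update b i (some ℓ)) + g b'

/-- `g` is a goal function for `f` with goal value `Q`. -/
def GoalFn {n : ℕ} (f : (Fin n → Bool) → Bool) (g : (Fin n → Option Bool) → ℕ)
    (Q : ℕ) : Prop :=
  Mono g ∧ Submod g ∧ ∀ b, g b = Q ↔ IsCert f b

/-- `g` is a `k`-goal function for `f` with goal value `Q`. -/
def KGoalFn {n : ℕ} (f : (Fin n → Bool) → Bool) (k : Bool)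
    (g : (Fin n → Option Bool) → ℕ) (Q : ℕ) : Prop :=
  Mono g ∧ Submod g ∧ (∀ b, IsKCert f k b → g b = Q) ∧ (∀ b, ¬ IsKCert f k b → g b < Q)

/-- The goal value `Γ(f)`: the minimum goal value of any goal function for `f`. -/
noncomputable def gamma {n : ℕ} (f : (Fin n → Bool) → Bool) : ℕ :=
  sInf {Q | ∃ g, GoalFn f g Q}

/-- The `k`-goal value `Γ^k(f)`. -/
noncomputable def gammaK {n : ℕ} (f : (Fin n → Bool) → Bool) (k : Bool) : ℕ :=
  sInf {Q | ∃ g, KGoalFn f k g Q}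

/-- The weight of a partial assignment: the number of non-`*` coordinates. -/
noncomputable def wt {n : ℕ} (b : Fin n → Option Bool) : ℕ :=
  (Finset.univ.filter (fun i => (b i).isSome)).card

/-- `f` depends on its `i`-th variable. -/
def DependsOnVar {n : ℕ} (f : (Fin n → Bool) → Bool) (i : Fin n) : Prop :=
  ∃ x, f (Function.update x i true) ≠ f (Function.update x i false)

noncomputable def ones {n : ℕ} (b : Fin n → Option Bool) : ℕ :=
  (Finset.univ.filter (fun i => b i = some true)).card

noncomputable def zeros {n : ℕ} (b : Fin n → Option Bool) : ℕ :=
  (Finset.univ.filter (fun i => b i = some false)).card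

lemma card_filter_val {n : ℕ} (p : ℕ → Prop) [DecidablePred p] :
    (Finset.univ.filter (fun i : Fin n => p i.val)).card
      = ((Finset.range n).filter p).card := by
  classical
  simp only [Finset.card_filter]
  exact Fin.sum_univ_eq_sum_range (fun a => if p a then 1 else 0) n

lemma ones_le_of_extends {n : ℕ} {b b' : Fin n → Option Bool} (h : Extends b' b) :
    ones b ≤ ones b' := by
  apply Finset.card_le_card
  intro i hi
  simp only [Finset.mem_filter, Finset.mem_univ, true_and] at *
  exact h i true hi

lemma zeros_le_of_extends {n : ℕ} {b b' : Fin n → Option Bool} (h : Extends b' b) :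
    zeros b ≤ zeros b' := by
  apply Finset.card_le_card
  intro i hi
  simp only [Finset.mem_filter, Finset.mem_univ, true_and] at *
  exact h i false hi

lemma ones_update_true {n : ℕ} {b : Fin n → Option Bool} {i : Fin n} (h : b i = none) :
    ones (Function.update b i (some true)) = ones b + 1 := by
  unfold ones
  have heq : (Finset.univ.filter (fun j => Function.update b i (some true) j = some true))
      = insert i (Finset.univ.filter (fun j => b j = some true)) := by
    ext j
    simp only [Finset.mem_filter, Finset.mem_univ, true_and, Finset.mem_insert,
      Function.update_apply]
    by_cases hj : j = i <;> simp [hj]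
  rw [heq, Finset.card_insert_of_notMem (by simp [h])]

lemma zeros_update_true {n : ℕ} {b : Fin n → Option Bool} {i : Fin n} (h : b i = none) :
    zeros (Function.update b i (some true)) = zeros b := by
  unfold zeros
  congr 1
  ext j
  simp only [Finset.mem_filter, Finset.mem_univ, true_and, Function.update_apply]
  by_cases hj : j = i <;> simp [hj, h]

lemma ones_update_false {n : ℕ} {b : Fin n → Option Bool} {i : Fin n} (h : b i = none) :
    ones (Function.update b i (some false)) = ones b := by
  unfold ones
  congr 1
  ext j
  simp only [Finset.mem_filter, Finset.mem_univ, true_and, Function.update_apply]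
  by_cases hj : j = i <;> simp [hj, h]

lemma zeros_update_false {n : ℕ} {b : Fin n → Option Bool} {i : Fin n} (h : b i = none) :
    zeros (Function.update b i (some false)) = zeros b + 1 := by
  unfold zeros
  have heq : (Finset.univ.filter (fun j => Function.update b i (some false) j = some false))
      = insert i (Finset.univ.filter (fun j => b j = some false)) := by
    ext j
    simp only [Finset.mem_filter, Finset.mem_univ, true_and, Finset.mem_insert,
      Function.update_apply]
    by_cases hj : j = i <;> simp [hj]
  rw [heq, Finset.card_insert_of_notMem (by simp [h])]

lemma tcard_eq {n : ℕ} (x : Fin n → Bool) :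
    (Finset.univ.filter (fun i => x i = true)).card
      + (Finset.univ.filter (fun i => x i = false)).card = n := by
  classical
  have h2 : (Finset.univ.filter (fun i => x i = false))
      = (Finset.univ.filter (fun i => ¬ (x i = true))) := by
    ext j; simp
  rw [h2]
  rw [Finset.card_filter_add_card_filter_not]
  simp

lemma ones_le_tones {n : ℕ} {x : Fin n → Bool} {b : Fin n → Option Bool}
    (h : TExtends x b) : ones b ≤ (Finset.univ.filter (fun i => x i = true)).card := by
  apply Finset.card_le_card
  intro i hi
  simp only [Finset.mem_filter, Finset.mem_univ, true_and] at *
  exact h i true hi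

lemma zeros_le_tzeros {n : ℕ} {x : Fin n → Bool} {b : Fin n → Option Bool}
    (h : TExtends x b) : zeros b ≤ (Finset.univ.filter (fun i => x i = false)).card := by
  apply Finset.card_le_card
  intro i hi
  simp only [Finset.mem_filter, Finset.mem_univ, true_and] at *
  exact h i false hi

lemma cert_iff {n k : ℕ} (hk1 : 1 ≤ k) (hkn : k ≤ n) (b : Fin n → Option Bool) :
    IsCert (fun x : Fin n → Bool =>
      decide (k ≤ (Finset.univ.filter (fun i => x i = true)).card)) b
      ↔ k ≤ ones b ∨ n - k + 1 ≤ zeros b := by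
  constructor
  · intro hc
    by_contra hcon
    push_neg at hcon
    obtain ⟨ho, hz⟩ := hcon
    set x : Fin n → Bool := fun i => (b i).getD true with hxdef
    set y : Fin n → Bool := fun i => (b i).getD false with hydef
    have hx : TExtends x b := by intro i v h; simp [hxdef, h]
    have hy : TExtends y b := by intro i v h; simp [hydef, h]
    have hxo : (Finset.univ.filter (fun i => x i = true)).card = n - zeros b := by
      have hset : (Finset.univ.filter (fun i => x i = true))
          = (Finset.univ.filter (fun i => ¬ (b i = some false))) := by
        ext j
        simp only [Finset.mem_filter, Finset.mem_univ, true_and, hxdef]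
        cases h : b j <;> simp [h]
      rw [hset]
      have := Finset.card_filter_add_card_filter_not
        (s := (Finset.univ : Finset (Fin n))) (p := fun i => b i = some false)
      simp only [Finset.card_univ, Fintype.card_fin] at this
      have hz' : (Finset.univ.filter (fun i => b i = some false)).card = zeros b := rfl
      omega
    have hyo : (Finset.univ.filter (fun i => y i = true)).card = ones b := by
      have hset : (Finset.univ.filter (fun i => y i = true))
          = (Finset.univ.filter (fun i => b i = some true)) := by
        ext j
        simp only [Finset.mem_filter, Finset.mem_univ, true_and, hydef]
        cases h : b j <;> simp [h]
      rw [hset]; rfl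
    have hfx : decide (k ≤ (Finset.univ.filter (fun i => x i = true)).card) = true := by
      rw [decide_eq_true_eq, hxo]; omega
    have hfy : decide (k ≤ (Finset.univ.filter (fun i => y i = true)).card) = false := by
      rw [decide_eq_false_iff_not, hyo]; omega
    have := hc x y hx hy
    simp only [hfx, hfy] at this
    exact absurd this (by simp)
  · intro h
    intro x y hx hy
    rcases h with h | h
    · have h1 : k ≤ (Finset.univ.filter (fun i => x i = true)).card :=
        le_trans h (ones_le_tones hx)
      have h2 : k ≤ (Finset.univ.filter (fun i => y i = true)).card :=
        le_trans h (ones_le_tones hy)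
      simp [h1, h2]
    · have h1 : (Finset.univ.filter (fun i => x i = true)).card < k := by
        have := zeros_le_tzeros hx
        have := tcard_eq x
        omega
      have h2 : (Finset.univ.filter (fun i => y i = true)).card < k := by
        have := zeros_le_tzeros hy
        have := tcard_eq y
        omega
      simp only [decide_eq_decide]
      omega

lemma total_cert {n : ℕ} (f : (Fin n → Bool) → Bool) (b : Fin n → Option Bool)
    (hb : ∀ i, b i ≠ none) : IsCert f b := by
  intro x y hx hy
  have hxy : x = y := by
    funext i
    cases h : b i with
    | none => exact absurd h (hb i)
    | some v => rw [hx i v h, hy i v h]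
  rw [hxy]
lemma arith_key (k K o o' z z' : ℕ) (h1 : o ≤ o') (h2 : z ≤ z') :
    (k - (o+1)) * (K - z) + (k - o') * (K - z')
      ≤ (k - (o'+1)) * (K - z') + (k - o) * (K - z) := by
  rcases le_or_gt k o' with h | h
  · have e1 : k - o' = 0 := by omega
    have e2 : k - (o'+1) = 0 := by omega
    rw [e1, e2]
    simpa using Nat.mul_le_mul_right (K - z) (by omega : k - (o+1) ≤ k - o)
  · have e1 : k - o = (k - (o+1)) + 1 := by omega
    have e2 : k - o' = (k - (o'+1)) + 1 := by omega
    rw [e1, e2]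
    have h3 : K - z' ≤ K - z := by omega
    nlinarith [h3]

noncomputable def gfun (n k : ℕ) (b : Fin n → Option Bool) : ℕ :=
  k * (n - k + 1) - (k - ones b) * ((n - k + 1) - zeros b)

lemma gfun_sub_le (n k : ℕ) (b : Fin n → Option Bool) :
    (k - ones b) * ((n - k + 1) - zeros b) ≤ k * (n - k + 1) :=
  Nat.mul_le_mul (Nat.sub_le _ _) (Nat.sub_le _ _)

lemma gfun_mono (n k : ℕ) : Mono (gfun n k) := by
  intro b b' h
  unfold gfun
  have ho := ones_le_of_extends h
  have hz := zeros_le_of_extends h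
  have hkey : (k - ones b') * ((n - k + 1) - zeros b')
      ≤ (k - ones b) * ((n - k + 1) - zeros b) :=
    Nat.mul_le_mul (by omega) (by omega)
  omega

lemma gfun_submod (n k : ℕ) : Submod (gfun n k) := by
  intro b b' i ℓ hext hb hb'
  have ho := ones_le_of_extends hext
  have hz := zeros_le_of_extends hext
  have B1 := gfun_sub_le n k b
  have B2 := gfun_sub_le n k b'
  have B3 := gfun_sub_le n k (Function.update b i (some ℓ))
  have B4 := gfun_sub_le n k (Function.update b' i (some ℓ))
  cases ℓ
  · unfold gfun at *
    rw [ones_update_false hb, zeros_update_false hb, ones_update_false hb',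
      zeros_update_false hb'] at *
    have key := arith_key (n-k+1) k (zeros b) (zeros b') (ones b) (ones b') hz ho
    have e1 : ((n-k+1) - (zeros b + 1)) * (k - ones b)
        = (k - ones b) * ((n-k+1) - (zeros b + 1)) := Nat.mul_comm _ _
    have e2 : ((n-k+1) - (zeros b')) * (k - ones b')
        = (k - ones b') * ((n-k+1) - zeros b') := Nat.mul_comm _ _
    have e3 : ((n-k+1) - (zeros b' + 1)) * (k - ones b')
        = (k - ones b') * ((n-k+1) - (zeros b' + 1)) := Nat.mul_comm _ _
    have e4 : ((n-k+1) - (zeros b)) * (k - ones b)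
        = (k - ones b) * ((n-k+1) - zeros b) := Nat.mul_comm _ _
    rw [e1, e2, e3, e4] at key
    omega
  · unfold gfun at *
    rw [ones_update_true hb, zeros_update_true hb, ones_update_true hb',
      zeros_update_true hb'] at *
    have key := arith_key k (n-k+1) (ones b) (ones b') (zeros b) (zeros b') ho hz
    omega

lemma gfun_goal (n k : ℕ) (hk1 : 1 ≤ k) (hkn : k ≤ n) :
    GoalFn (fun x : Fin n → Bool =>
      decide (k ≤ (Finset.univ.filter (fun i => x i = true)).card))
      (gfun n k) (k * (n - k + 1)) := by
  refine ⟨gfun_mono n k, gfun_submod n k, ?_⟩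
  intro b
  rw [cert_iff hk1 hkn b]
  unfold gfun
  have B := gfun_sub_le n k b
  have hkK : 1 ≤ k * (n - k + 1) := by
    have : 1 ≤ n - k + 1 := by omega
    calc 1 = 1 * 1 := by ring
    _ ≤ k * (n - k + 1) := Nat.mul_le_mul hk1 this
  constructor
  · intro h
    have hp : (k - ones b) * ((n - k + 1) - zeros b) = 0 := by omega
    rcases Nat.mul_eq_zero.1 hp with h' | h' <;> omega
  · intro h
    have hp : (k - ones b) * ((n - k + 1) - zeros b) = 0 := by
      rcases h with h | h
      · rw [Nat.sub_eq_zero_of_le h, Nat.zero_mul]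
      · rw [Nat.sub_eq_zero_of_le h, Nat.mul_zero]
    omega
def eAsg (n k o z : ℕ) : Fin n → Option Bool := fun i =>
  if i.val < k ∧ i.val ≠ o then some true
  else if k ≤ i.val ∧ i.val < k + z then some false
  else none

def mAsg (n k o z : ℕ) : Fin n → Option Bool := fun i =>
  if i.val < k ∧ i.val ≠ o then some true
  else if i.val = k + z then none
  else some false

def bAsg (n o : ℕ) : Fin n → Option Bool := fun i =>
  if i.val < o then some true else none

lemma ones_eAsg {n k o : ℕ} (hkn : k ≤ n) (ho : o < k) (z : ℕ) :
    ones (eAsg n k o z) = k - 1 := by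
  have h2 : ((Finset.range n).filter (fun a =>
      (if a < k ∧ a ≠ o then some true
       else if k ≤ a ∧ a < k + z then some false else (none : Option Bool)) = some true)).card
      = k - 1 := by
    have hs : (Finset.range n).filter (fun a =>
        (if a < k ∧ a ≠ o then some true
         else if k ≤ a ∧ a < k + z then some false else (none : Option Bool)) = some true)
        = (Finset.range k).erase o := by
      ext a
      simp only [Finset.mem_filter, Finset.mem_range, Finset.mem_erase]
      have hiffp : ((if a < k ∧ a ≠ o then some true
          else if k ≤ a ∧ a < k + z then some false else (none : Option Bool)) = some true)
          ↔ (a < k ∧ a ≠ o) := by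
        split_ifs with h1 h2 <;> simp <;> omega
      rw [hiffp]
      omega
    rw [hs, Finset.card_erase_of_mem (Finset.mem_range.2 ho), Finset.card_range]
  unfold ones eAsg
  exact (card_filter_val _).trans h2

lemma zeros_eAsg {n k o : ℕ} (ho : o < k) {z : ℕ} (hz : z ≤ n - k) (hkn : k ≤ n) :
    zeros (eAsg n k o z) = z := by
  have h2 : ((Finset.range n).filter (fun a =>
      (if a < k ∧ a ≠ o then some true
       else if k ≤ a ∧ a < k + z then some false else (none : Option Bool)) = some false)).card
      = z := by
    have hs : (Finset.range n).filter (fun a =>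
        (if a < k ∧ a ≠ o then some true
         else if k ≤ a ∧ a < k + z then some false else (none : Option Bool)) = some false)
        = Finset.Ico k (k + z) := by
      ext a
      simp only [Finset.mem_filter, Finset.mem_range, Finset.mem_Ico]
      have hiffp : ((if a < k ∧ a ≠ o then some true
          else if k ≤ a ∧ a < k + z then some false else (none : Option Bool)) = some false)
          ↔ (k ≤ a ∧ a < k + z) := by
        split_ifs with h1 h2 <;> simp <;> omega
      rw [hiffp]
      omega
    rw [hs, Nat.card_Ico]
    omega
  unfold zeros eAsg
  exact (card_filter_val _).trans h2

lemma ones_mAsg {n k o : ℕ} (hkn : k ≤ n) (ho : o < k) (z : ℕ) :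
    ones (mAsg n k o z) = k - 1 := by
  have h2 : ((Finset.range n).filter (fun a =>
      (if a < k ∧ a ≠ o then some true
       else if a = k + z then none else (some false : Option Bool)) = some true)).card
      = k - 1 := by
    have hs : (Finset.range n).filter (fun a =>
        (if a < k ∧ a ≠ o then some true
         else if a = k + z then none else (some false : Option Bool)) = some true)
        = (Finset.range k).erase o := by
      ext a
      simp only [Finset.mem_filter, Finset.mem_range, Finset.mem_erase]
      have hiffp : ((if a < k ∧ a ≠ o then some true
          else if a = k + z then none else (some false : Option Bool)) = some true)
          ↔ (a < k ∧ a ≠ o) := by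
        split_ifs with h1 h2 <;> simp <;> omega
      rw [hiffp]
      omega
    rw [hs, Finset.card_erase_of_mem (Finset.mem_range.2 ho), Finset.card_range]
  unfold ones mAsg
  exact (card_filter_val _).trans h2

lemma zeros_mAsg {n k o : ℕ} (ho : o < k) {z : ℕ} (hz : z < n - k) :
    zeros (mAsg n k o z) = n - k := by
  have h2 : ((Finset.range n).filter (fun a =>
      (if a < k ∧ a ≠ o then some true
       else if a = k + z then none else (some false : Option Bool)) = some false)).card
      = n - k := by
    have hs : (Finset.range n).filter (fun a =>
        (if a < k ∧ a ≠ o then some true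
         else if a = k + z then none else (some false : Option Bool)) = some false)
        = insert o ((Finset.Ico k n).erase (k + z)) := by
      ext a
      simp only [Finset.mem_filter, Finset.mem_range, Finset.mem_insert, Finset.mem_erase,
        Finset.mem_Ico]
      have hiffp : ((if a < k ∧ a ≠ o then some true
          else if a = k + z then none else (some false : Option Bool)) = some false)
          ↔ (¬(a < k ∧ a ≠ o) ∧ a ≠ k + z) := by
        split_ifs with h1 h2 <;> simp <;> omega
      rw [hiffp]
      omega
    rw [hs]
    rw [Finset.card_insert_of_notMem (by
      simp only [Finset.mem_erase, Finset.mem_Ico]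
      omega)]
    rw [Finset.card_erase_of_mem (by simp only [Finset.mem_Ico]; omega), Nat.card_Ico]
    omega
  unfold zeros mAsg
  exact (card_filter_val _).trans h2

lemma ones_bAsg (n o : ℕ) (ho : o ≤ n) : ones (bAsg n o) = o := by
  have h2 : ((Finset.range n).filter (fun a =>
      (if a < o then some true else (none : Option Bool)) = some true)).card = o := by
    have hs : (Finset.range n).filter (fun a =>
        (if a < o then some true else (none : Option Bool)) = some true)
        = Finset.range o := by
      ext a
      simp only [Finset.mem_filter, Finset.mem_range]
      have hiffp : ((if a < o then some true else (none : Option Bool)) = some true)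
          ↔ (a < o) := by
        split_ifs with h1 <;> simp <;> omega
      rw [hiffp]
      omega
    rw [hs, Finset.card_range]
  unfold ones bAsg
  exact (card_filter_val _).trans h2
lemma lower_bound (n k : ℕ) (hk1 : 1 ≤ k) (hkn : k ≤ n)
    (g : (Fin n → Option Bool) → ℕ) (Q : ℕ)
    (hg : GoalFn (fun x : Fin n → Bool =>
      decide (k ≤ (Finset.univ.filter (fun i => x i = true)).card)) g Q) :
    k * (n - k + 1) ≤ Q := by
  obtain ⟨hmono, hsub, hiff⟩ := hg
  have hQle : ∀ b, g b ≤ Q := by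
    intro b
    have hext : Extends (fun i => some ((b i).getD true)) b := by
      intro i v h; simp [h]
    have hcert : IsCert (fun x : Fin n → Bool =>
        decide (k ≤ (Finset.univ.filter (fun i => x i = true)).card))
        (fun i : Fin n => some ((b i).getD true)) :=
      total_cert _ _ (fun i => by simp)
    calc g b ≤ g (fun i => some ((b i).getD true)) := hmono _ _ hext
      _ = Q := (hiff _).2 hcert
  have hlt : ∀ b, ¬ (k ≤ ones b ∨ n - k + 1 ≤ zeros b) → g b < Q := by
    intro b hb
    refine lt_of_le_of_ne (hQle b) (fun he => hb ?_)
    exact (cert_iff hk1 hkn b).1 ((hiff b).1 he)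
  have key2 : ∀ o, o < k → g (eAsg n k o 0) + (n - k + 1) ≤ Q := by
    intro o ho
    have chain : ∀ z, z ≤ n - k → g (eAsg n k o 0) + z ≤ g (eAsg n k o z) := by
      intro z
      induction z with
      | zero => intro _; simp
      | succ z ih =>
        intro hz
        have hz' : z < n - k := by omega
        have hkz : k + z < n := by omega
        set i : Fin n := ⟨k + z, hkz⟩ with hidef
        have hival : (i : ℕ) = k + z := rfl
        have hc1 : ¬((i : ℕ) < k ∧ (i : ℕ) ≠ o) := by omega
        have hc2 : ¬(k ≤ (i : ℕ) ∧ (i : ℕ) < k + z) := by omega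
        have hext : Extends (mAsg n k o z) (eAsg n k o z) := by
          intro j v hj
          by_cases h1 : (j : ℕ) < k ∧ (j : ℕ) ≠ o
          · show (if (j : ℕ) < k ∧ (j : ℕ) ≠ o then some true
              else if (j : ℕ) = k + z then none else some false) = some v
            rw [if_pos h1]
            have hj' : (if (j : ℕ) < k ∧ (j : ℕ) ≠ o then some true
                else if k ≤ (j : ℕ) ∧ (j : ℕ) < k + z then some false else none) = some v := hj
            rw [if_pos h1] at hj'
            exact hj'
          · by_cases h2 : k ≤ (j : ℕ) ∧ (j : ℕ) < k + z
            · show (if (j : ℕ) < k ∧ (j : ℕ) ≠ o then some true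
                else if (j : ℕ) = k + z then none else some false) = some v
              have hj3 : ¬((j : ℕ) = k + z) := by omega
              rw [if_neg h1, if_neg hj3]
              have hj' : (if (j : ℕ) < k ∧ (j : ℕ) ≠ o then some true
                  else if k ≤ (j : ℕ) ∧ (j : ℕ) < k + z then some false else none) = some v := hj
              rw [if_neg h1, if_pos h2] at hj'
              exact hj'
            · have hj' : (if (j : ℕ) < k ∧ (j : ℕ) ≠ o then some true
                  else if k ≤ (j : ℕ) ∧ (j : ℕ) < k + z then some false else none) = some v := hj
              rw [if_neg h1, if_neg h2] at hj'
              exact absurd hj' (by simp)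
        have hb : eAsg n k o z i = none := by
          show (if (i : ℕ) < k ∧ (i : ℕ) ≠ o then some true
              else if k ≤ (i : ℕ) ∧ (i : ℕ) < k + z then some false else none) = none
          rw [if_neg hc1, if_neg hc2]
        have hb' : mAsg n k o z i = none := by
          show (if (i : ℕ) < k ∧ (i : ℕ) ≠ o then some true
              else if (i : ℕ) = k + z then none else some false) = none
          rw [if_neg hc1, if_pos hival]
        have hupd_e : Function.update (eAsg n k o z) i (some false) = eAsg n k o (z+1) := by
          funext j
          rcases eq_or_ne j i with rfl | hne
          · rw [Function.update_self]
            show some false = (if (i : ℕ) < k ∧ (i : ℕ) ≠ o then some true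
              else if k ≤ (i : ℕ) ∧ (i : ℕ) < k + (z+1) then some false else none)
            rw [if_neg hc1, if_pos (by omega : k ≤ (i : ℕ) ∧ (i : ℕ) < k + (z+1))]
          · rw [Function.update_of_ne hne]
            have hjne : (j : ℕ) ≠ k + z := by
              intro h; exact hne (Fin.ext (by rw [h, hival]))
            show (if (j : ℕ) < k ∧ (j : ℕ) ≠ o then some true
                else if k ≤ (j : ℕ) ∧ (j : ℕ) < k + z then some false else none)
              = (if (j : ℕ) < k ∧ (j : ℕ) ≠ o then some true
                else if k ≤ (j : ℕ) ∧ (j : ℕ) < k + (z+1) then some false else none)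
            by_cases h1 : (j : ℕ) < k ∧ (j : ℕ) ≠ o
            · rw [if_pos h1, if_pos h1]
            · rw [if_neg h1, if_neg h1]
              by_cases h2 : k ≤ (j : ℕ) ∧ (j : ℕ) < k + z
              · rw [if_pos h2, if_pos (by omega : k ≤ (j : ℕ) ∧ (j : ℕ) < k + (z+1))]
              · rw [if_neg h2, if_neg (by omega : ¬(k ≤ (j : ℕ) ∧ (j : ℕ) < k + (z+1)))]
        have hTtotal : ∀ j, Function.update (mAsg n k o z) i (some false) j ≠ none := by
          intro j
          rcases eq_or_ne j i with rfl | hne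
          · rw [Function.update_self]; simp
          · rw [Function.update_of_ne hne]
            have hjne : (j : ℕ) ≠ k + z := by
              intro h; exact hne (Fin.ext (by rw [h, hival]))
            show (if (j : ℕ) < k ∧ (j : ℕ) ≠ o then some true
                else if (j : ℕ) = k + z then none else some false) ≠ none
            by_cases h1 : (j : ℕ) < k ∧ (j : ℕ) ≠ o
            · rw [if_pos h1]; simp
            · rw [if_neg h1, if_neg hjne]; simp
        have hgT : g (Function.update (mAsg n k o z) i (some false)) = Q :=
          (hiff _).2 (total_cert _ _ hTtotal)
        have hm_lt : g (mAsg n k o z) < Q := by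
          apply hlt
          rw [ones_mAsg hkn ho z, zeros_mAsg ho hz']
          omega
        have hstep := hsub (eAsg n k o z) (mAsg n k o z) i false hext hb hb'
        rw [hgT, hupd_e] at hstep
        have hih := ih (by omega)
        omega
    have hnc : g (eAsg n k o (n - k)) < Q := by
      apply hlt
      rw [ones_eAsg hkn ho (n - k), zeros_eAsg ho le_rfl hkn]
      omega
    have := chain (n - k) le_rfl
    omega
  have key3 : ∀ o, o ≤ k → o * (n - k + 1) ≤ g (bAsg n o) := by
    intro o
    induction o with
    | zero => intro _; simp
    | succ o ih =>
      intro ho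
      have ho' : o < k := by omega
      have hon : o < n := by omega
      set i : Fin n := ⟨o, hon⟩ with hidef
      have hival : (i : ℕ) = o := rfl
      have hext : Extends (eAsg n k o 0) (bAsg n o) := by
        intro j v hj
        have hj' : (if (j : ℕ) < o then some true else none) = some v := hj
        by_cases h1 : (j : ℕ) < o
        · rw [if_pos h1] at hj'
          show (if (j : ℕ) < k ∧ (j : ℕ) ≠ o then some true
              else if k ≤ (j : ℕ) ∧ (j : ℕ) < k + 0 then some false else none) = some v
          rw [if_pos (by omega : (j : ℕ) < k ∧ (j : ℕ) ≠ o)]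
          exact hj'
        · rw [if_neg h1] at hj'
          exact absurd hj' (by simp)
      have hbnone : bAsg n o i = none := by
        show (if (i : ℕ) < o then some true else none) = none
        rw [if_neg (by omega : ¬((i : ℕ) < o))]
      have hcnone : eAsg n k o 0 i = none := by
        show (if (i : ℕ) < k ∧ (i : ℕ) ≠ o then some true
            else if k ≤ (i : ℕ) ∧ (i : ℕ) < k + 0 then some false else none) = none
        rw [if_neg (by omega : ¬((i : ℕ) < k ∧ (i : ℕ) ≠ o)),
          if_neg (by omega : ¬(k ≤ (i : ℕ) ∧ (i : ℕ) < k + 0))]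
      have hupd_c : Function.update (eAsg n k o 0) i (some true) = bAsg n k := by
        funext j
        rcases eq_or_ne j i with rfl | hne
        · rw [Function.update_self]
          show some true = (if (i : ℕ) < k then some true else none)
          rw [if_pos (by omega : (i : ℕ) < k)]
        · rw [Function.update_of_ne hne]
          have hjne : (j : ℕ) ≠ o := by
            intro h; exact hne (Fin.ext (by rw [h, hival]))
          show (if (j : ℕ) < k ∧ (j : ℕ) ≠ o then some true
              else if k ≤ (j : ℕ) ∧ (j : ℕ) < k + 0 then some false else none)
            = (if (j : ℕ) < k then some true else none)
          by_cases h1 : (j : ℕ) < k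
          · rw [if_pos (⟨h1, hjne⟩ : (j : ℕ) < k ∧ (j : ℕ) ≠ o), if_pos h1]
          · rw [if_neg (by omega : ¬((j : ℕ) < k ∧ (j : ℕ) ≠ o)),
              if_neg (by omega : ¬(k ≤ (j : ℕ) ∧ (j : ℕ) < k + 0)), if_neg h1]
      have hupd_b : Function.update (bAsg n o) i (some true) = bAsg n (o + 1) := by
        funext j
        rcases eq_or_ne j i with rfl | hne
        · rw [Function.update_self]
          show some true = (if (i : ℕ) < o + 1 then some true else none)
          rw [if_pos (by omega : (i : ℕ) < o + 1)]
        · rw [Function.update_of_ne hne]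
          have hjne : (j : ℕ) ≠ o := by
            intro h; exact hne (Fin.ext (by rw [h, hival]))
          show (if (j : ℕ) < o then some true else none)
            = (if (j : ℕ) < o + 1 then some true else none)
          by_cases h1 : (j : ℕ) < o
          · rw [if_pos h1, if_pos (by omega : (j : ℕ) < o + 1)]
          · rw [if_neg h1, if_neg (by omega : ¬((j : ℕ) < o + 1))]
      have hcert_bk : g (bAsg n k) = Q := by
        apply (hiff _).2
        apply (cert_iff hk1 hkn _).2
        exact Or.inl (by rw [ones_bAsg n k hkn])
      have hstep := hsub (bAsg n o) (eAsg n k o 0) i true hext hbnone hcnone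
      rw [hupd_c, hupd_b, hcert_bk] at hstep
      have h2 := key2 o ho'
      have h3 := ih (by omega)
      have hmul : (o + 1) * (n - k + 1) = o * (n - k + 1) + (n - k + 1) := by ring
      omega
  have hcert_bk : g (bAsg n k) = Q := by
    apply (hiff _).2
    apply (cert_iff hk1 hkn _).2
    exact Or.inl (by rw [ones_bAsg n k hkn])
  have := key3 k le_rfl
  omega

/-- for the `k`-of-`n` threshold function, `Γ(f) = k(n − k + 1)`. -/
theorem stmt10 (n k : ℕ) (hk1 : 1 ≤ k) (hkn : k ≤ n) :
    gamma (fun x : Fin n → Bool =>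
        decide (k ≤ (Finset.univ.filter (fun i => x i = true)).card)) = k * (n - k + 1) := by
  have hmem : k * (n - k + 1) ∈ {Q | ∃ g, GoalFn (fun x : Fin n → Bool =>
      decide (k ≤ (Finset.univ.filter (fun i => x i = true)).card)) g Q} :=
    ⟨gfun n k, gfun_goal n k hk1 hkn⟩
  unfold gamma
  apply le_antisymm
  · exact Nat.sInf_le hmem
  · obtain ⟨g, hg⟩ := Nat.sInf_mem (Set.nonempty_of_mem hmem)
    exact lower_bound n k hk1 hkn g _ hg
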